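/- Let x : ℝ → ℝ^d be a C² NT-periodic solution of M·ẍ + C·ẋ + K·x = −∇U(x) + f(t), where M, K are symmetric positive semi-definite, C is symmetric positive definite with smallest eigenvalue C_min > 0, U : ℝ^d → ℝ is C¹, and f is continuous and NT-periodic with mean f̂. Then the L²(0,NT)-norm of ẋ satisfies ‖ẋ‖_{L²(0,NT)} ≤ (1/C_min)·‖f − f̂‖_{L²(0,NT)}. -/

import Mathlib

open MeasureTheory intervalIntegral

noncomputable def mv {d : ℕ} (M : Matrix (Fin d) (Fin d) ℝ)
    (v : EuclideanSpace ℝ (Fin d)) : EuclideanSpace ℝ (Fin d) :=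
  WithLp.toLp 2 (M.mulVec v)

noncomputable def mvL {d : ℕ} (M : Matrix (Fin d) (Fin d) ℝ) :
    EuclideanSpace ℝ (Fin d) →L[ℝ] EuclideanSpace ℝ (Fin d) :=
  LinearMap.toContinuousLinearMap (Matrix.toEuclideanLin M)

lemma mvL_apply {d : ℕ} (M : Matrix (Fin d) (Fin d) ℝ) (y : EuclideanSpace ℝ (Fin d)) :
    mvL M y = mv M y := by
  simp [mvL, mv, Matrix.toEuclideanLin, Matrix.toLpLin_apply]

lemma mv_continuous {d : ℕ} (A : Matrix (Fin d) (Fin d) ℝ)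
    {h : ℝ → EuclideanSpace ℝ (Fin d)} (hc : Continuous h) :
    Continuous fun t => mv A (h t) := by
  simpa [Function.comp_def, mvL_apply] using ((mvL A).continuous.comp hc)

lemma mv_inner_symm {d : ℕ} (M : Matrix (Fin d) (Fin d) ℝ) (hM : M.IsSymm)
    (a b : EuclideanSpace ℝ (Fin d)) :
    (inner ℝ a (mv M b) : ℝ) = (inner ℝ b (mv M a) : ℝ) := by
  simp only [mv, PiLp.inner_apply, RCLike.inner_apply, starRingEnd_apply, star_trivial,
    Matrix.mulVec, dotProduct, Finset.mul_sum, Finset.sum_mul]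
  rw [Finset.sum_comm]
  apply Finset.sum_congr rfl; intro i _
  apply Finset.sum_congr rfl; intro j _
  rw [hM.apply i j]; ring

lemma periodic_deriv' {E : Type*} [NormedAddCommGroup E] [NormedSpace ℝ E]
    (f : ℝ → E) (c : ℝ) (h : Function.Periodic f c) : Function.Periodic (deriv f) c := by
  intro t
  have h1 : (fun s => f (s + c)) = f := funext h
  calc deriv f (t + c) = deriv (fun s => f (s + c)) t := by rw [deriv_comp_add_const]
    _ = deriv f t := by rw [h1]

lemma integral_deriv_zero (F G : ℝ → ℝ) (P : ℝ) (hFG : ∀ t, HasDerivAt F (G t) t)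
    (hGi : IntervalIntegrable G volume 0 P) (hper : F P = F 0) :
    ∫ t in (0:ℝ)..P, G t = 0 := by
  rw [intervalIntegral.integral_eq_sub_of_hasDerivAt (fun t _ => hFG t) hGi, hper, sub_self]

theorem stmt_8 {d : ℕ} (N : ℕ) (T : ℝ) (hN : 1 ≤ N) (hT : 0 < T)
    (M C K : Matrix (Fin d) (Fin d) ℝ) (hMs : M.IsSymm) (hCs : C.IsSymm) (hKs : K.IsSymm)
    (hMpsd : ∀ y : EuclideanSpace ℝ (Fin d), 0 ≤ (inner ℝ y (mv M y) : ℝ))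
    (hKpsd : ∀ y : EuclideanSpace ℝ (Fin d), 0 ≤ (inner ℝ y (mv K y) : ℝ))
    (Cmin : ℝ) (hCmin : 0 < Cmin)
    (hC : ∀ y : EuclideanSpace ℝ (Fin d), Cmin * ‖y‖ ^ 2 ≤ (inner ℝ y (mv C y) : ℝ))
    (U : EuclideanSpace ℝ (Fin d) → ℝ) (hU : ContDiff ℝ 1 U)
    (f : ℝ → EuclideanSpace ℝ (Fin d)) (hf : Continuous f)
    (hfper : Function.Periodic f (N * T))
    (fhat : EuclideanSpace ℝ (Fin d))
    (hfhat : fhat = (N * T : ℝ)⁻¹ • ∫ t in (0:ℝ)..(N * T), f t)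
    (x : ℝ → EuclideanSpace ℝ (Fin d)) (hx : ContDiff ℝ 2 x)
    (hxper : Function.Periodic x (N * T))
    (hode : ∀ t : ℝ, mv M (deriv (deriv x) t) + mv C (deriv x t) + mv K (x t)
      = -gradient U (x t) + f t) :
    Real.sqrt (∫ t in (0:ℝ)..(N * T), ‖deriv x t‖ ^ 2)
      ≤ (1 / Cmin) * Real.sqrt (∫ t in (0:ℝ)..(N * T), ‖f t - fhat‖ ^ 2) := by
  have hNpos : (0:ℝ) < N := by exact_mod_cast Nat.lt_of_lt_of_le Nat.zero_lt_one hN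
  set P : ℝ := (N : ℝ) * T with hPdef
  have hPpos : 0 < P := mul_pos hNpos hT
  set v : ℝ → EuclideanSpace ℝ (Fin d) := deriv x with hvdef
  -- regularity
  have h2 : ContDiff ℝ ((1:WithTop ℕ∞) + 1) x := by norm_num; exact hx
  rw [contDiff_succ_iff_deriv] at h2
  have hxd : Differentiable ℝ x := h2.1
  have hv1 : ContDiff ℝ 1 v := h2.2.2
  have hvd : Differentiable ℝ v := hv1.differentiable one_ne_zero
  have hvc : Continuous v := hvd.continuous
  have hxc : Continuous x := hxd.continuous
  have hac : Continuous (deriv v) := hv1.continuous_deriv le_rfl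
  have hvper : Function.Periodic v P := periodic_deriv' x P hxper
  have hxP : x P = x 0 := by simpa using hxper 0
  have hvP : v P = v 0 := by simpa using hvper 0
  have hUd : ∀ p, HasGradientAt U (gradient U p) p :=
    fun p => ((hU.differentiable one_ne_zero) p).hasGradientAt
  -- continuity of gradient along x, via the ODE
  have hgrad : ∀ t, gradient U (x t)
      = f t - (mv M (deriv v t) + mv C (v t) + mv K (x t)) := by
    intro t
    have h := hode t
    rw [h]; abel
  have hgc : Continuous fun t => gradient U (x t) := by
    have he : (fun t => gradient U (x t))
        = fun t => f t - (mv M (deriv v t) + mv C (v t) + mv K (x t)) := funext hgrad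
    rw [he]
    exact hf.sub (((mv_continuous M hac).add (mv_continuous C hvc)).add (mv_continuous K hxc))
  -- continuity of integrands
  have c1 : Continuous fun t => (inner ℝ (v t) (f t - fhat) : ℝ) :=
    hvc.inner (hf.sub continuous_const)
  have c2 : Continuous fun t => (inner ℝ (v t) fhat : ℝ) := hvc.inner continuous_const
  have c3 : Continuous fun t => (inner ℝ (v t) (mv M (deriv v t)) : ℝ) :=
    hvc.inner (mv_continuous M hac)
  have c4 : Continuous fun t => (inner ℝ (v t) (mv K (x t)) : ℝ) :=
    hvc.inner (mv_continuous K hxc)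
  have c5 : Continuous fun t => (inner ℝ (v t) (gradient U (x t)) : ℝ) := hvc.inner hgc
  have cC : Continuous fun t => (inner ℝ (v t) (mv C (v t)) : ℝ) :=
    hvc.inner (mv_continuous C hvc)
  have cn : Continuous fun t => ‖v t‖ ^ 2 := (hvc.norm.pow 2)
  have cg : Continuous fun t => ‖f t - fhat‖ ^ 2 := ((hf.sub continuous_const).norm.pow 2)
  -- zero integral: M term
  have hM0 : ∫ t in (0:ℝ)..P, (inner ℝ (v t) (mv M (deriv v t)) : ℝ) = 0 := by
    have key : ∀ t, HasDerivAt (fun s => (inner ℝ (v s) (mvL M (v s)) : ℝ))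
        (2 * inner ℝ (v t) (mv M (deriv v t))) t := by
      intro t
      have h1 := HasDerivAt.inner ℝ (hvd t).hasDerivAt
        (((mvL M).hasFDerivAt).comp_hasDerivAt t (hvd t).hasDerivAt)
      have h2' : (inner ℝ (v t) (mvL M (deriv v t)) : ℝ) + inner ℝ (deriv v t) (mvL M (v t))
          = 2 * inner ℝ (v t) (mv M (deriv v t)) := by
        rw [mvL_apply, mvL_apply, mv_inner_symm M hMs (deriv v t) (v t)]; ring
      simp only [Function.comp_apply] at h1
      rw [h2'] at h1
      exact h1
    have h0 : ∫ t in (0:ℝ)..P, 2 * (inner ℝ (v t) (mv M (deriv v t)) : ℝ) = 0 :=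
      integral_deriv_zero _ _ P key ((continuous_const.mul c3).intervalIntegrable _ _)
        (by rw [hvP])
    rw [intervalIntegral.integral_const_mul] at h0
    linarith
  -- zero integral: K term
  have hK0 : ∫ t in (0:ℝ)..P, (inner ℝ (v t) (mv K (x t)) : ℝ) = 0 := by
    have key : ∀ t, HasDerivAt (fun s => (inner ℝ (x s) (mvL K (x s)) : ℝ))
        (2 * inner ℝ (v t) (mv K (x t))) t := by
      intro t
      have h1 := HasDerivAt.inner ℝ (hxd t).hasDerivAt
        (((mvL K).hasFDerivAt).comp_hasDerivAt t (hxd t).hasDerivAt)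
      have h2' : (inner ℝ (x t) (mvL K (deriv x t)) : ℝ) + inner ℝ (deriv x t) (mvL K (x t))
          = 2 * inner ℝ (v t) (mv K (x t)) := by
        rw [mvL_apply, mvL_apply, mv_inner_symm K hKs (x t) (deriv x t)]
        rw [hvdef]; ring
      simp only [Function.comp_apply] at h1
      rw [h2'] at h1
      exact h1
    have h0 : ∫ t in (0:ℝ)..P, 2 * (inner ℝ (v t) (mv K (x t)) : ℝ) = 0 :=
      integral_deriv_zero _ _ P key ((continuous_const.mul c4).intervalIntegrable _ _)
        (by rw [hxP])
    rw [intervalIntegral.integral_const_mul] at h0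
    linarith
  -- zero integral: U term
  have hU0 : ∫ t in (0:ℝ)..P, (inner ℝ (v t) (gradient U (x t)) : ℝ) = 0 := by
    have key : ∀ t, HasDerivAt (fun s => U (x s))
        (inner ℝ (v t) (gradient U (x t))) t := by
      intro t
      have h1 := (hasGradientAt_iff_hasFDerivAt.mp (hUd (x t))).comp_hasDerivAt t
        (hxd t).hasDerivAt
      rw [InnerProductSpace.toDual_apply_apply, real_inner_comm] at h1
      exact h1
    exact integral_deriv_zero _ _ P key (c5.intervalIntegrable _ _) (by rw [hxP])
  -- zero integral: fhat term
  have hfh0 : ∫ t in (0:ℝ)..P, (inner ℝ (v t) fhat : ℝ) = 0 := by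
    have key : ∀ t, HasDerivAt (fun s => (inner ℝ (x s) fhat : ℝ))
        (inner ℝ (v t) fhat) t := by
      intro t
      have h1 := HasDerivAt.inner ℝ (hxd t).hasDerivAt (hasDerivAt_const t fhat)
      rw [inner_zero_right, zero_add] at h1
      exact h1
    exact integral_deriv_zero _ _ P key (c2.intervalIntegrable _ _) (by rw [hxP])
  -- pointwise identity from the ODE
  have hpt : ∀ t, (inner ℝ (v t) (mv C (v t)) : ℝ)
      = ((((inner ℝ (v t) (f t - fhat) : ℝ) + inner ℝ (v t) fhat)
          - inner ℝ (v t) (mv M (deriv v t))) - inner ℝ (v t) (mv K (x t)))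
          - inner ℝ (v t) (gradient U (x t)) := by
    intro t
    have h := congrArg (fun y => (inner ℝ (v t) y : ℝ)) (hode t)
    simp only [inner_add_right, inner_sub_right, inner_neg_right] at h ⊢
    linarith
  -- integral identity
  have hICv : ∫ t in (0:ℝ)..P, (inner ℝ (v t) (mv C (v t)) : ℝ)
      = ∫ t in (0:ℝ)..P, (inner ℝ (v t) (f t - fhat) : ℝ) := by
    rw [intervalIntegral.integral_congr (g := fun t =>
      ((((inner ℝ (v t) (f t - fhat) : ℝ) + inner ℝ (v t) fhat)
          - inner ℝ (v t) (mv M (deriv v t))) - inner ℝ (v t) (mv K (x t)))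
          - inner ℝ (v t) (gradient U (x t))) (fun t _ => hpt t)]
    rw [intervalIntegral.integral_sub
        ((((c1.fun_add c2).fun_sub c3).fun_sub c4).intervalIntegrable _ _) (c5.intervalIntegrable _ _),
      intervalIntegral.integral_sub
        (((c1.fun_add c2).fun_sub c3).intervalIntegrable _ _) (c4.intervalIntegrable _ _),
      intervalIntegral.integral_sub
        ((c1.fun_add c2).intervalIntegrable _ _) (c3.intervalIntegrable _ _),
      intervalIntegral.integral_add (c1.intervalIntegrable _ _) (c2.intervalIntegrable _ _)]
    rw [hM0, hK0, hU0, hfh0]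
    ring
  set A : ℝ := ∫ t in (0:ℝ)..P, ‖v t‖ ^ 2 with hAdef
  set D : ℝ := ∫ t in (0:ℝ)..P, ‖f t - fhat‖ ^ 2 with hDdef
  have hA1 : Cmin * A ≤ ∫ t in (0:ℝ)..P, (inner ℝ (v t) (mv C (v t)) : ℝ) := by
    rw [hAdef, ← intervalIntegral.integral_const_mul]
    exact intervalIntegral.integral_mono_on hPpos.le
      ((continuous_const.mul cn).intervalIntegrable _ _) (cC.intervalIntegrable _ _)
      (fun t _ => hC (v t))
  have hA2 : (∫ t in (0:ℝ)..P, (inner ℝ (v t) (f t - fhat) : ℝ))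
      ≤ (Cmin * A + Cmin⁻¹ * D) / 2 := by
    have pt : ∀ t ∈ Set.Icc (0:ℝ) P, (inner ℝ (v t) (f t - fhat) : ℝ)
        ≤ (Cmin * ‖v t‖ ^ 2 + Cmin⁻¹ * ‖f t - fhat‖ ^ 2) / 2 := by
      intro t _
      have h1 : (inner ℝ (v t) (f t - fhat) : ℝ) ≤ ‖v t‖ * ‖f t - fhat‖ :=
        real_inner_le_norm _ _
      have h2 : Cmin * ‖v t‖ ^ 2 + Cmin⁻¹ * ‖f t - fhat‖ ^ 2 - 2 * (‖v t‖ * ‖f t - fhat‖)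
          = Cmin⁻¹ * (Cmin * ‖v t‖ - ‖f t - fhat‖) ^ 2 := by
        field_simp; ring
      have h3 : 0 ≤ Cmin⁻¹ * (Cmin * ‖v t‖ - ‖f t - fhat‖) ^ 2 := by positivity
      linarith [h2 ▸ h3]
    calc (∫ t in (0:ℝ)..P, (inner ℝ (v t) (f t - fhat) : ℝ))
        ≤ ∫ t in (0:ℝ)..P, (Cmin * ‖v t‖ ^ 2 + Cmin⁻¹ * ‖f t - fhat‖ ^ 2) / 2 :=
          intervalIntegral.integral_mono_on hPpos.le (c1.intervalIntegrable _ _)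
            ((((continuous_const.mul cn).add (continuous_const.mul cg)).div_const 2).intervalIntegrable _ _)
            pt
      _ = (Cmin * A + Cmin⁻¹ * D) / 2 := by
          rw [intervalIntegral.integral_div, intervalIntegral.integral_add
              ((continuous_const.fun_mul cn).intervalIntegrable _ _)
              ((continuous_const.fun_mul cg).intervalIntegrable _ _),
            intervalIntegral.integral_const_mul, intervalIntegral.integral_const_mul]
  have h3 : Cmin * A ≤ Cmin⁻¹ * D := by
    have := hICv ▸ hA1
    linarith
  have hA : A ≤ (1 / Cmin) ^ 2 * D := by
    have h4 := mul_le_mul_of_nonneg_left h3 (inv_nonneg.mpr hCmin.le)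
    rw [← mul_assoc, inv_mul_cancel₀ hCmin.ne', one_mul] at h4
    calc A ≤ Cmin⁻¹ * (Cmin⁻¹ * D) := h4
      _ = (1 / Cmin) ^ 2 * D := by rw [one_div, sq]; ring
  calc Real.sqrt A ≤ Real.sqrt ((1 / Cmin) ^ 2 * D) := Real.sqrt_le_sqrt hA
    _ = (1 / Cmin) * Real.sqrt D := by
        rw [Real.sqrt_mul (sq_nonneg _), Real.sqrt_sq (by positivity)]
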